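/- arXiv:1307.3050 — 3 statements merged into one kernel-verified Lean document; each statement's English description precedes it below -/
import Mathlib

section
/- Let G be a finite simple graph on [n] and order the minimal monomial generators m_S of the monomial ideal of independent sets I as m_1 ≻ m_2 ≻ ... (decreasing in the order: m_i ≻ m_j iff deg_s(m_i) < deg_s(m_j), or deg_s(m_i) = deg_s(m_j) and the s-part of m_i is lexicographically larger). Then for every i > 1, the colon ideal (m_1,...,m_{i-1}) : (m_i) equals the ideal generated by the variables t_r with r ∈ S_i, where m_i corresponds to the independent set S_i. In particular, I has linear quotients. -/
open MvPolynomial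

/-- A set `S` of vertices is independent in `G` if no two of its elements are adjacent. -/
def IsIndepSet {V : Type*} (G : SimpleGraph V) (S : Finset V) : Prop :=
  ∀ i ∈ S, ∀ j ∈ S, ¬ G.Adj i j

/-- The monomial `m_S = ∏_{i ∈ S} s_i · ∏_{i ∉ S} t_i` in
`T = K[s_i, t_i : i ∈ [n]]`, where the variable `s_i` is `X (Sum.inl i)` and
`t_i` is `X (Sum.inr i)`. -/
noncomputable def mS (K : Type*) [Field K] {n : ℕ} (S : Finset (Fin n)) :
    MvPolynomial (Fin n ⊕ Fin n) K :=
  (∏ i ∈ S, X (Sum.inl i)) * (∏ i ∈ Sᶜ, X (Sum.inr i))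

/-- The monomial ideal of independent sets of the graph `G`. -/
noncomputable def indepIdeal (K : Type*) [Field K] {n : ℕ} (G : SimpleGraph (Fin n)) :
    Ideal (MvPolynomial (Fin n ⊕ Fin n) K) :=
  Ideal.span {m | ∃ S : Finset (Fin n), IsIndepSet G S ∧ m = mS K S}

/-- The s-part of `m_{S'}` is lexicographically larger than the s-part of `m_S`
(with `s_1 > s_2 > ⋯ > s_n`): at the first index where `S'` and `S` differ, that
index belongs to `S'`. -/
def LexGT {n : ℕ} (S' S : Finset (Fin n)) : Prop :=
  ∃ r : Fin n, r ∈ S' ∧ r ∉ S ∧ ∀ q : Fin n, q < r → (q ∈ S' ↔ q ∈ S)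

/-- `m_{S'} ≻ m_S` in the order used for linear quotients:
`deg_s(m_{S'}) < deg_s(m_S)`, or the s-degrees agree and `m_{S'} >_lex m_S`. -/
def Prec {n : ℕ} (S' S : Finset (Fin n)) : Prop :=
  S'.card < S.card ∨ (S'.card = S.card ∧ LexGT S' S)

/-- The exponent vector of the monomial `m_S`. -/
noncomputable def eS {n : ℕ} (S : Finset (Fin n)) : (Fin n ⊕ Fin n) →₀ ℕ :=
  (∑ i ∈ S, Finsupp.single (Sum.inl i) 1) + ∑ i ∈ Sᶜ, Finsupp.single (Sum.inr i) 1

lemma eS_apply_inl {n : ℕ} (S : Finset (Fin n)) (i : Fin n) :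
    eS S (Sum.inl i) = if i ∈ S then 1 else 0 := by
  simp [eS, Finsupp.finset_sum_apply, Finsupp.single_apply, Finset.sum_ite_eq]

lemma eS_apply_inr {n : ℕ} (S : Finset (Fin n)) (i : Fin n) :
    eS S (Sum.inr i) = if i ∈ S then 0 else 1 := by
  simp [eS, Finsupp.finset_sum_apply, Finsupp.single_apply, Finset.sum_ite_eq]

lemma prod_X_eq_monomial {n : ℕ} (K : Type*) [Field K] (A : Finset (Fin n))
    (g : Fin n → (Fin n ⊕ Fin n)) :
    (∏ i ∈ A, (X (g i) : MvPolynomial (Fin n ⊕ Fin n) K)) =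
      monomial (∑ i ∈ A, Finsupp.single (g i) 1) 1 := by
  classical
  induction A using Finset.induction with
  | empty => simp
  | insert _ _ h ih =>
    rw [Finset.prod_insert h, Finset.sum_insert h, ih, X, monomial_mul, one_mul]

lemma mS_eq_monomial (K : Type*) [Field K] {n : ℕ} (S : Finset (Fin n)) :
    mS K S = monomial (eS S) 1 := by
  rw [mS, eS, prod_X_eq_monomial, prod_X_eq_monomial, monomial_mul, one_mul]

/-- if `S'` is `≻ S` then some element of `S` is not in `S'`. -/
lemma exists_mem_not_mem {n : ℕ} {S' S : Finset (Fin n)} (h : Prec S' S) :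
    ∃ r ∈ S, r ∉ S' := by
  rw [← Finset.not_subset]
  intro hsub
  rcases h with h | ⟨hcard, r, hr1, hr2, _⟩
  · exact absurd (Finset.card_le_card hsub) (Nat.not_le_of_lt h)
  · exact hr2 ((Finset.eq_of_subset_of_card_le hsub (le_of_eq hcard)) ▸ hr1)

/-- The key Finsupp identity: `eS S + single (inr r) 1 = eS (S.erase r) + single (inl r) 1`. -/
lemma eS_erase {n : ℕ} (S : Finset (Fin n)) (r : Fin n) (hr : r ∈ S) :
    eS S + Finsupp.single (Sum.inr r) 1 =
      eS (S.erase r) + Finsupp.single (Sum.inl r) 1 := by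
  ext x
  rcases x with i | i <;>
    simp only [Finsupp.add_apply, eS_apply_inl, eS_apply_inr, Finsupp.single_apply,
      Finset.mem_erase] <;> by_cases h : i = r <;> simp [h, hr] <;> omega

/-- ordering the generators `m_S` decreasingly in `≻`, each colon ideal
`(m_1, …, m_{i-1}) : (m_i)` equals `(t_r : r ∈ S_i)`; in particular the monomial
ideal of independent sets has linear quotients. -/
theorem indepIdeal_linear_quotients (K : Type*) [Field K] {n : ℕ}
    (G : SimpleGraph (Fin n)) (S : Finset (Fin n)) (hS : IsIndepSet G S)
    (hne : S.Nonempty) :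
    (Ideal.span {m | ∃ S' : Finset (Fin n),
        IsIndepSet G S' ∧ Prec S' S ∧ m = mS K S'}).colon (Ideal.span {mS K S}) =
      Ideal.span ((fun r => (X (Sum.inr r) : MvPolynomial (Fin n ⊕ Fin n) K)) '' S) := by
  classical
  have hgen : {m | ∃ S' : Finset (Fin n), IsIndepSet G S' ∧ Prec S' S ∧ m = mS K S'} =
      (fun e => monomial e (1 : K)) ''
        {e | ∃ S' : Finset (Fin n), IsIndepSet G S' ∧ Prec S' S ∧ e = eS S'} := by
    ext m
    constructor
    · rintro ⟨S', h1, h2, rfl⟩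
      exact ⟨eS S', ⟨S', h1, h2, rfl⟩, (mS_eq_monomial K S').symm⟩
    · rintro ⟨e, ⟨S', h1, h2, rfl⟩, rfl⟩
      exact ⟨S', h1, h2, (mS_eq_monomial K S').symm⟩
  have hrhs : ((fun r => (X (Sum.inr r) : MvPolynomial (Fin n ⊕ Fin n) K)) '' S) =
      (fun e => monomial e (1 : K)) ''
        ((fun r : Fin n => Finsupp.single (Sum.inr r : Fin n ⊕ Fin n) 1) '' S) := by
    rw [Set.image_image]
    apply Set.image_congr
    intro r _
    rw [X]
  rw [hgen, hrhs]
  apply le_antisymm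
  · -- colon ⊆ span of t's
    intro f hf
    rw [Ideal.mem_colon_span_singleton] at hf
    rw [mS_eq_monomial, mem_ideal_span_monomial_image] at hf
    rw [mem_ideal_span_monomial_image]
    intro c hc
    have hd : (c + eS S) ∈ (f * monomial (eS S) (1 : K)).support := by
      rw [mem_support_iff, coeff_mul_monomial, mul_one]
      exact mem_support_iff.mp hc
    obtain ⟨e, ⟨S', hS'1, hS'2, rfl⟩, hle⟩ := hf _ hd
    obtain ⟨r, hrS, hrS'⟩ := exists_mem_not_mem hS'2
    refine ⟨Finsupp.single (Sum.inr r) 1, ⟨r, hrS, rfl⟩, ?_⟩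
    rw [Finsupp.single_le_iff]
    have := hle (Sum.inr r)
    rw [Finsupp.add_apply, eS_apply_inr, eS_apply_inr, if_pos hrS, if_neg hrS'] at this
    omega
  · -- span of t's ⊆ colon
    rw [Ideal.span_le]
    rintro _ ⟨e, ⟨r, hr, rfl⟩, rfl⟩
    rw [SetLike.mem_coe, Ideal.mem_colon_span_singleton, mS_eq_monomial, monomial_mul, one_mul]
    rw [add_comm, eS_erase S r (Finset.mem_coe.mp hr), ← one_mul (1 : K), ← monomial_mul]
    apply Ideal.mul_mem_right
    apply Ideal.subset_span
    refine ⟨eS (S.erase r), ⟨S.erase r, ?_, ?_, rfl⟩, by rw [one_mul]⟩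
    · intro i hi j hj
      exact hS i (Finset.mem_of_mem_erase hi) j (Finset.mem_of_mem_erase hj)
    · exact Or.inl (Finset.card_erase_lt_of_mem hr)
end

section
/- For the centipede graph W_n (n ≥ 1), the number of independent sets of cardinality k is s_k = Σ_{j=0}^{k} C(n−j, n−k)·C(n+1−j, j) for 0 ≤ k ≤ n, and the independence number of W_n is n. -/
open Classical in
/-- The number of independent sets of cardinality `k` in `G`. -/
noncomputable def numIndep {V : Type*} [Fintype V] (G : SimpleGraph V) (k : ℕ) : ℕ :=
  (Finset.univ.filter fun S : Finset V => IsIndepSet G S ∧ S.card = k).card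

open Classical in
/-- The independence number `α(G)`: the maximal cardinality of an independent set. -/
noncomputable def indepNum {V : Type*} [Fintype V] (G : SimpleGraph V) : ℕ :=
  (Finset.univ.filter fun S : Finset V => IsIndepSet G S).sup Finset.card

/-- The centipede graph `W_n`: vertices `a_1, …, a_n` (left) and `b_1, …, b_n`
(right), with edges `{a_i, b_i}` and `{b_j, b_{j+1}}`. -/
def centipede (n : ℕ) : SimpleGraph (Fin n ⊕ Fin n) :=
  SimpleGraph.fromRel (fun u v =>
    match u, v with
    | Sum.inl i, Sum.inr j => i = j
    | Sum.inr i, Sum.inr j => i.val + 1 = j.val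
    | _, _ => False)

section Aux

open Finset Sum

def PathIndep {n : ℕ} (B : Finset (Fin n)) : Prop :=
  ∀ i ∈ B, ∀ j ∈ B, (i:ℕ) + 1 ≠ (j:ℕ)

instance {n : ℕ} : DecidablePred (PathIndep (n := n)) := fun B => by
  unfold PathIndep; infer_instance

lemma centipede_adj_ll (n : ℕ) (i j : Fin n) : ¬ (centipede n).Adj (inl i) (inl j) := by
  simp [centipede, SimpleGraph.fromRel_adj]

lemma centipede_adj_lr (n : ℕ) (i j : Fin n) : (centipede n).Adj (inl i) (inr j) ↔ i = j := by
  simp [centipede, SimpleGraph.fromRel_adj]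

lemma centipede_adj_rl (n : ℕ) (i j : Fin n) : (centipede n).Adj (inr i) (inl j) ↔ j = i := by
  simp [centipede, SimpleGraph.fromRel_adj]

lemma centipede_adj_rr (n : ℕ) (i j : Fin n) :
    (centipede n).Adj (inr i) (inr j) ↔ ((i:ℕ)+1 = j ∨ (j:ℕ)+1 = i) := by
  simp [centipede, SimpleGraph.fromRel_adj]
  intro h he
  rw [he] at h; omega

lemma indep_iff (n : ℕ) (S : Finset (Fin n ⊕ Fin n)) :
    IsIndepSet (centipede n) S ↔
      Disjoint S.toLeft S.toRight ∧ PathIndep S.toRight := by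
  constructor
  · intro h
    refine ⟨Finset.disjoint_left.mpr fun a ha hb => ?_, fun i hi j hj hij => ?_⟩
    · rw [Finset.mem_toLeft] at ha
      rw [Finset.mem_toRight] at hb
      exact h _ ha _ hb ((centipede_adj_lr n a a).mpr rfl)
    · rw [Finset.mem_toRight] at hi hj
      exact h _ hi _ hj ((centipede_adj_rr n i j).mpr (Or.inl hij))
  · rintro ⟨hd, hp⟩ u hu v hv hadj
    rcases u with i | i <;> rcases v with j | j
    · exact centipede_adj_ll n i j hadj
    · rw [centipede_adj_lr] at hadj
      subst hadj
      exact Finset.disjoint_left.mp hd (Finset.mem_toLeft.mpr hu) (Finset.mem_toRight.mpr hv)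
    · rw [centipede_adj_rl] at hadj
      subst hadj
      exact Finset.disjoint_left.mp hd (Finset.mem_toLeft.mpr hv) (Finset.mem_toRight.mpr hu)
    · rw [centipede_adj_rr] at hadj
      have hi := Finset.mem_toRight.mpr hu
      have hj := Finset.mem_toRight.mpr hv
      rcases hadj with h | h
      · exact hp _ hi _ hj h
      · exact hp _ hj _ hi h

def pathCount (n j : ℕ) : ℕ :=
  (((Finset.range n).powersetCard j).filter (fun S => ∀ x ∈ S, x + 1 ∉ S)).card

lemma pathCount_zero (n : ℕ) : pathCount n 0 = 1 := by
  simp [pathCount, Finset.powersetCard_zero, Finset.filter_singleton]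

lemma pathCount_nil (j : ℕ) : pathCount 0 (j+1) = 0 := by
  rw [pathCount, Finset.card_eq_zero, Finset.filter_eq_empty_iff]
  intro S hS
  rw [Finset.mem_powersetCard] at hS
  exfalso
  have := Finset.card_le_card hS.1
  simp only [Finset.range_zero, Finset.card_empty, hS.2] at this
  omega

lemma pathCount_one_one : pathCount 1 1 = 1 := by
  decide

lemma pathCount_one (j : ℕ) : pathCount 1 (j+2) = 0 := by
  rw [pathCount, Finset.card_eq_zero, Finset.filter_eq_empty_iff]
  intro S hS
  rw [Finset.mem_powersetCard] at hS
  exfalso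
  have := Finset.card_le_card hS.1
  simp only [Finset.card_range, hS.2] at this
  omega

lemma pathCount_rec (n j : ℕ) :
    pathCount (n+2) (j+1) = pathCount (n+1) (j+1) + pathCount n j := by
  classical
  unfold pathCount
  set F := ((Finset.range (n+2)).powersetCard (j+1)).filter (fun S => ∀ x ∈ S, x + 1 ∉ S) with hF
  rw [← Finset.card_filter_add_card_filter_not (s := F) (p := fun S => (n+1) ∉ S)]
  congr 1
  · -- doesn't contain n+1
    congr 1
    ext S
    simp only [hF, Finset.mem_filter, Finset.mem_powersetCard, Finset.subset_iff,
      Finset.mem_range]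
    constructor
    · rintro ⟨⟨⟨hsub, hcard⟩, hind⟩, hnot⟩
      refine ⟨⟨fun x hx => ?_, hcard⟩, hind⟩
      have h1 := hsub hx
      rcases Nat.lt_or_ge x (n+1) with h | h
      · exact h
      · exfalso; apply hnot; have hx' : x = n+1 := by omega
        rwa [← hx']
    · rintro ⟨⟨hsub, hcard⟩, hind⟩
      refine ⟨⟨⟨fun x hx => by have := hsub hx; omega, hcard⟩, hind⟩, fun h => by
        have := hsub h; omega⟩
  · -- contains n+1 : bijection with pathCount n j
    apply Finset.card_bij (fun S _ => S.erase (n+1))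
    · rintro S hS
      simp only [hF, Finset.mem_filter, Finset.mem_powersetCard, not_not] at hS
      obtain ⟨⟨⟨hsub, hcard⟩, hind⟩, hmem⟩ := hS
      have hn : n ∉ S := by
        intro hn'; exact hind n hn' hmem
      simp only [Finset.mem_filter, Finset.mem_powersetCard]
      refine ⟨⟨fun x hx => ?_, ?_⟩, fun x hx => ?_⟩
      · rw [Finset.mem_erase] at hx
        have := hsub hx.2
        rw [Finset.mem_range] at this ⊢
        have : x ≠ n := fun h => hn (h ▸ hx.2)
        have := Finset.mem_range.mp (hsub hx.2)
        omega
      · rw [Finset.card_erase_of_mem hmem, hcard]; omega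
      · rw [Finset.mem_erase] at hx
        intro hc
        exact hind x hx.2 (Finset.mem_of_mem_erase hc)
    · intro S hS T hT h
      simp only [hF, Finset.mem_filter, not_not] at hS hT
      rw [← Finset.insert_erase hS.2, ← Finset.insert_erase hT.2, h]
    · intro T hT
      simp only [Finset.mem_filter, Finset.mem_powersetCard] at hT
      obtain ⟨⟨hsub, hcard⟩, hind⟩ := hT
      have hnotin : (n+1) ∉ T := fun h => by have := Finset.mem_range.mp (hsub h); omega
      refine ⟨insert (n+1) T, ?_, by rw [Finset.erase_insert hnotin]⟩
      simp only [hF, Finset.mem_filter, Finset.mem_powersetCard, not_not,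
        Finset.mem_insert, true_or]
      refine ⟨⟨⟨fun x hx => ?_, ?_⟩, fun x hx hc => ?_⟩, by simp⟩
      · rcases Finset.mem_insert.mp hx with h | h
        · rw [h]; exact Finset.mem_range.mpr (by omega)
        · have := Finset.mem_range.mp (hsub h); exact Finset.mem_range.mpr (by omega)
      · rw [Finset.card_insert_of_notMem hnotin, hcard]
      · rcases hx with h | h
        · rcases hc with h' | h'
          · omega
          · have := Finset.mem_range.mp (hsub h'); omega
        · rcases hc with h' | h'
          · have := Finset.mem_range.mp (hsub h); omega
          · exact hind x h h'

lemma pathCount_eq : ∀ n j, pathCount n j = (n + 1 - j).choose j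
  | n, 0 => by simp [pathCount_zero]
  | 0, j+1 => by
      rw [pathCount_nil]
      rw [Nat.choose_eq_zero_of_lt (by omega)]
  | 1, 1 => by rw [pathCount_one_one]; rfl
  | 1, j+2 => by
      rw [pathCount_one]
      have : 1 + 1 - (j+2) = 0 := by omega
      rw [this]
      simp [Nat.choose_eq_zero_of_lt]
  | n+2, j+1 => by
      rw [pathCount_rec, pathCount_eq (n+1) (j+1), pathCount_eq n j]
      rcases le_or_gt (j+1) (n+2) with h | h
      · have h1 : n + 2 + 1 - (j+1) = (n + 1 + 1 - (j+1)) + 1 := by omega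
        have h2 : n + 1 - j = n + 1 + 1 - (j + 1) := by omega
        rw [h1, Nat.choose_succ_succ', ← h2, Nat.add_comm]
      · have h1 : n + 2 + 1 - (j + 1) = n + 2 - j := by omega
        have h2 : n + 1 + 1 - (j + 1) = n + 1 - j := by omega
        rw [h1, h2]
        rw [Nat.choose_eq_zero_of_lt (by omega), Nat.choose_eq_zero_of_lt (by omega),
          Nat.choose_eq_zero_of_lt (by omega)]

lemma card_pathIndep (n j : ℕ) :
    ((Finset.univ : Finset (Finset (Fin n))).filter
        fun B => PathIndep B ∧ B.card = j).card = pathCount n j := by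
  classical
  apply Finset.card_bij (fun B _ => B.map Fin.valEmbedding)
  · intro B hB
    simp only [Finset.mem_filter, Finset.mem_univ, true_and] at hB
    obtain ⟨hind, hcard⟩ := hB
    simp only [Finset.mem_filter, Finset.mem_powersetCard]
    refine ⟨⟨fun x hx => ?_, by rw [Finset.card_map, hcard]⟩, fun x hx hx1 => ?_⟩
    · rw [Finset.mem_map] at hx
      obtain ⟨i, _, rfl⟩ := hx
      exact Finset.mem_range.mpr i.isLt
    · rw [Finset.mem_map] at hx hx1
      obtain ⟨i, hi, rfl⟩ := hx
      obtain ⟨i', hi', he⟩ := hx1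
      exact hind i hi i' hi' (by simpa [Fin.valEmbedding, eq_comm] using he)
  · intro B hB T hT h
    exact Finset.map_injective Fin.valEmbedding h
  · intro T hT
    simp only [Finset.mem_filter, Finset.mem_powersetCard] at hT
    obtain ⟨⟨hsub, hcard⟩, hind⟩ := hT
    have hlt : ∀ m ∈ T, m < n := fun m hm => Finset.mem_range.mp (hsub hm)
    refine ⟨T.attachFin hlt, ?_, ?_⟩
    · simp only [Finset.mem_filter, Finset.mem_univ, true_and]
      constructor
      · intro i hi i' hi' he
        rw [Finset.mem_attachFin] at hi hi'
        exact hind (i : ℕ) hi (he ▸ hi')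
      · rw [Finset.card_attachFin, hcard]
    · ext x
      simp only [Finset.mem_map, Finset.mem_attachFin, Fin.valEmbedding_apply]
      constructor
      · rintro ⟨i, hi, rfl⟩; exact hi
      · intro hx; exact ⟨⟨x, hlt x hx⟩, hx, rfl⟩

lemma inner_count (n k : ℕ) (hk : k ≤ n) (B : Finset (Fin n)) :
    ((Finset.univ : Finset (Finset (Fin n))).filter
        fun A => Disjoint A B ∧ A.card + B.card = k).card
      = (n - B.card).choose (n - k) := by
  classical
  have hBn : B.card ≤ n := by
    simpa using Finset.card_le_card (Finset.subset_univ B)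
  rcases le_or_gt B.card k with hjk | hjk
  · have : (Finset.univ : Finset (Finset (Fin n))).filter
        (fun A => Disjoint A B ∧ A.card + B.card = k) = Bᶜ.powersetCard (k - B.card) := by
      ext A
      simp only [Finset.mem_filter, Finset.mem_univ, true_and, Finset.mem_powersetCard]
      constructor
      · rintro ⟨hd, hc⟩
        exact ⟨le_compl_iff_disjoint_right.mpr hd, by omega⟩
      · rintro ⟨hs, hc⟩
        exact ⟨le_compl_iff_disjoint_right.mp hs, by omega⟩
    rw [this, Finset.card_powersetCard, Finset.card_compl, Fintype.card_fin]
    have h1 : n - B.card - (k - B.card) = n - k := by omega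
    rw [← h1, Nat.choose_symm (by omega)]
  · have : (Finset.univ : Finset (Finset (Fin n))).filter
        (fun A => Disjoint A B ∧ A.card + B.card = k) = ∅ := by
      rw [Finset.filter_eq_empty_iff]
      rintro A _ ⟨_, hc⟩
      omega
    rw [this, Finset.card_empty, Nat.choose_eq_zero_of_lt (by omega)]

lemma numIndep_eq (n k : ℕ) (hk : k ≤ n) :
    numIndep (centipede n) k =
      ∑ j ∈ Finset.range (k + 1), Nat.choose (n - j) (n - k) * Nat.choose (n + 1 - j) j := by
  classical
  rw [numIndep]
  have hA : (Finset.univ.filter fun S : Finset (Fin n ⊕ Fin n) =>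
      IsIndepSet (centipede n) S ∧ S.card = k).card =
    ((Finset.univ : Finset (Finset (Fin n) × Finset (Fin n))).filter
      fun p => PathIndep p.2 ∧ Disjoint p.1 p.2 ∧ p.1.card + p.2.card = k).card := by
    refine Finset.card_bij' (fun S _ => (S.toLeft, S.toRight)) (fun p _ => p.1.disjSum p.2)
      ?_ ?_ ?_ ?_
    · intro S hS
      simp only [Finset.mem_filter, Finset.mem_univ, true_and] at hS ⊢
      obtain ⟨hind, hcard⟩ := hS
      rw [indep_iff] at hind
      exact ⟨hind.2, hind.1, by rw [Finset.card_toLeft_add_card_toRight, hcard]⟩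
    · intro p hp
      simp only [Finset.mem_filter, Finset.mem_univ, true_and] at hp ⊢
      obtain ⟨hpath, hdisj, hcard⟩ := hp
      refine ⟨?_, ?_⟩
      · rw [indep_iff, Finset.toLeft_disjSum, Finset.toRight_disjSum]
        exact ⟨hdisj, hpath⟩
      · rw [Finset.card_disjSum]; exact hcard
    · intro S hS
      exact Finset.toLeft_disjSum_toRight
    · intro p hp
      simp [Finset.toLeft_disjSum, Finset.toRight_disjSum]
  rw [hA]
  rw [Finset.card_eq_sum_card_fiberwise (f := Prod.snd)
    (t := (Finset.univ : Finset (Finset (Fin n)))) (fun p _ => Finset.mem_univ p.2)]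
  have hB : ∀ B : Finset (Fin n),
      (((Finset.univ : Finset (Finset (Fin n) × Finset (Fin n))).filter
        fun p => PathIndep p.2 ∧ Disjoint p.1 p.2 ∧ p.1.card + p.2.card = k).filter
          fun p => p.2 = B).card
      = if PathIndep B then (n - B.card).choose (n - k) else 0 := by
    intro B
    split_ifs with hPB
    · rw [← inner_count n k hk B]
      apply Finset.card_bij (fun p _ => p.1)
      · intro p hp
        simp only [Finset.mem_filter, Finset.mem_univ, true_and] at hp ⊢
        obtain ⟨⟨_, hd, hc⟩, h2⟩ := hp
        rw [h2] at hd hc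
        exact ⟨hd, hc⟩
      · rintro ⟨A₁, B₁⟩ h₁ ⟨A₂, B₂⟩ h₂ h
        simp only [Finset.mem_filter] at h₁ h₂
        simp only [Prod.mk.injEq]
        exact ⟨h, h₁.2.trans h₂.2.symm⟩
      · intro A hA'
        simp only [Finset.mem_filter, Finset.mem_univ, true_and] at hA'
        refine ⟨(A, B), ?_, rfl⟩
        simp only [Finset.mem_filter, Finset.mem_univ, true_and]
        exact ⟨⟨hPB, hA'.1, hA'.2⟩, trivial⟩
    · rw [Finset.card_eq_zero, Finset.filter_eq_empty_iff]
      intro p hp h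
      simp only [Finset.mem_filter, Finset.mem_univ, true_and] at hp
      exact hPB (h ▸ hp.1)
  calc (∑ B : Finset (Fin n),
      (((Finset.univ : Finset (Finset (Fin n) × Finset (Fin n))).filter
        fun p => PathIndep p.2 ∧ Disjoint p.1 p.2 ∧ p.1.card + p.2.card = k).filter
          fun p => p.2 = B).card)
      = ∑ B : Finset (Fin n), (if PathIndep B then (n - B.card).choose (n - k) else 0) := by
        exact Finset.sum_congr rfl fun B _ => hB B
    _ = ∑ B ∈ (Finset.univ : Finset (Finset (Fin n))).filter PathIndep,
          (n - B.card).choose (n - k) := by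
        rw [Finset.sum_filter]
    _ = ∑ j ∈ Finset.range (n+1), ∑ B ∈ ((Finset.univ : Finset (Finset (Fin n))).filter
          PathIndep).filter (fun B => B.card = j), (n - B.card).choose (n - k) := by
        refine (Finset.sum_fiberwise_of_maps_to (g := Finset.card)
          (fun B hB => Finset.mem_range.mpr ?_) _).symm
        have : B.card ≤ n := by simpa using Finset.card_le_card (Finset.subset_univ B)
        omega
    _ = ∑ j ∈ Finset.range (n+1), pathCount n j * (n - j).choose (n - k) := by
        refine Finset.sum_congr rfl fun j hj => ?_
        rw [← card_pathIndep n j, Finset.filter_filter]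
        rw [Finset.sum_congr rfl (fun B hB => ?_), Finset.sum_const, smul_eq_mul]
        simp only [Finset.mem_filter] at hB
        rw [hB.2.2]
    _ = ∑ j ∈ Finset.range (n+1), (n - j).choose (n - k) * (n + 1 - j).choose j := by
        refine Finset.sum_congr rfl fun j hj => ?_
        rw [pathCount_eq, Nat.mul_comm]
    _ = ∑ j ∈ Finset.range (k+1), (n - j).choose (n - k) * (n + 1 - j).choose j := by
        refine (Finset.sum_subset (Finset.range_subset_range.mpr (by omega)) fun j hj hj' => ?_).symm
        rw [Finset.mem_range] at hj hj'
        rw [Nat.choose_eq_zero_of_lt (show n - j < n - k by omega), Nat.zero_mul]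

end Aux

/-- for the centipede `W_n` (`n ≥ 1`), the number of independent sets of
cardinality `k` is `s_k = Σ_{j=0}^{k} C(n-j, n-k)·C(n+1-j, j)` for `0 ≤ k ≤ n`, and
the independence number of `W_n` is `n`. -/
theorem numIndep_centipede {n : ℕ} (hn : 1 ≤ n) :
    (∀ k ≤ n, numIndep (centipede n) k =
      ∑ j ∈ Finset.range (k + 1), Nat.choose (n - j) (n - k) * Nat.choose (n + 1 - j) j) ∧
    indepNum (centipede n) = n := by
  classical
  constructor
  · exact fun k hk => numIndep_eq n k hk
  · apply le_antisymm
    · unfold indepNum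
      apply Finset.sup_le
      intro S hS
      simp only [Finset.mem_filter, Finset.mem_univ, true_and] at hS
      rw [indep_iff] at hS
      rw [← Finset.card_toLeft_add_card_toRight,
        ← Finset.card_union_of_disjoint hS.1]
      simpa using Finset.card_le_card (Finset.subset_univ (S.toLeft ∪ S.toRight))
    · unfold indepNum
      have hind : IsIndepSet (centipede n)
          ((Finset.univ : Finset (Fin n)).map (Function.Embedding.inl)) := by
        intro u hu v hv
        simp only [Finset.mem_map, Function.Embedding.inl_apply] at hu hv
        obtain ⟨i, _, rfl⟩ := hu
        obtain ⟨j, _, rfl⟩ := hv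
        exact centipede_adj_ll n i j
      calc n = ((Finset.univ : Finset (Fin n)).map Function.Embedding.inl).card := by simp
        _ ≤ _ := Finset.le_sup (Finset.mem_filter.mpr ⟨Finset.mem_univ _, hind⟩)
end

section
/- For the cycle graph C_n with n ≥ 2, the number of independent sets of cardinality k equals (n/(n−k))·C(n−k, k) for 0 ≤ k ≤ ⌊n/2⌋. -/
open Finset

/-- Independent sets of the path graph on `{0, ..., m-1}`. -/
def pathSets (m k : ℕ) : Finset (Finset ℕ) :=
  ((Finset.range m).powersetCard k).filter (fun S => ∀ x ∈ S, x + 1 ∉ S)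

lemma mem_pathSets {m k : ℕ} {S : Finset ℕ} :
    S ∈ pathSets m k ↔ (∀ x ∈ S, x < m) ∧ S.card = k ∧ ∀ x ∈ S, x + 1 ∉ S := by
  simp [pathSets, Finset.mem_powersetCard, Finset.subset_iff, and_assoc]

lemma pathSets_zero_card (k : ℕ) : (pathSets m 0).card = 1 := by
  have : pathSets m 0 = {∅} := by
    ext S
    simp only [mem_pathSets, Finset.card_eq_zero, Finset.mem_singleton]
    constructor
    · rintro ⟨_, rfl, _⟩; rfl
    · rintro rfl; simp
  simp [this]

lemma pathSets_card_zero_m (k : ℕ) : (pathSets 0 (k+1)).card = 0 := by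
  have : pathSets 0 (k+1) = ∅ := by
    ext S
    simp only [mem_pathSets, Finset.notMem_empty, iff_false, not_and]
    intro h1 h2
    exfalso
    have : S = ∅ := by
      ext x; simp only [Finset.notMem_empty, iff_false]
      intro hx; exact absurd (h1 x hx) (by omega)
    simp [this] at h2
  simp [this]

lemma pathSets_one (k : ℕ) : (pathSets 1 k).card = (2 - k).choose k := by
  match k with
  | 0 => simpa using pathSets_zero_card 0
  | 1 =>
    have : pathSets 1 1 = {{0}} := by
      ext S
      simp only [mem_pathSets, Finset.mem_singleton, Finset.card_eq_one]
      constructor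
      · rintro ⟨h1, ⟨a, rfl⟩, _⟩
        have := h1 a (by simp)
        simp; omega
      · rintro rfl
        refine ⟨by simp, ⟨0, rfl⟩, by simp⟩
    simp [this]
  | (k+2) =>
    have : pathSets 1 (k+2) = ∅ := by
      ext S
      simp only [mem_pathSets, Finset.notMem_empty, iff_false, not_and]
      intro h1 h2 _
      exfalso
      have hsub : S ⊆ {0} := by intro x hx; simp; have := h1 x hx; omega
      have := Finset.card_le_card hsub
      simp only [Finset.card_singleton] at this
      omega
    simp [this, Nat.choose_eq_zero_of_lt]

lemma pathSets_rec (m k : ℕ) :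
    (pathSets (m+2) (k+1)).card = (pathSets (m+1) (k+1)).card + (pathSets m k).card := by
  have hsplit := Finset.card_filter_add_card_filter_not
    (s := pathSets (m+2) (k+1)) (p := fun S => m+1 ∈ S)
  have h1 : (pathSets (m+2) (k+1)).filter (fun S => ¬ m+1 ∈ S) = pathSets (m+1) (k+1) := by
    ext S
    simp only [Finset.mem_filter, mem_pathSets]
    constructor
    · rintro ⟨⟨hsub, hcard, hcond⟩, hmem⟩
      exact ⟨fun x hx => by have := hsub x hx; have : x ≠ m+1 := fun h => hmem (h ▸ hx); omega,
        hcard, hcond⟩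
    · rintro ⟨hsub, hcard, hcond⟩
      exact ⟨⟨fun x hx => by have := hsub x hx; omega, hcard, hcond⟩,
        fun h => by have := hsub _ h; omega⟩
  have h2 : ((pathSets (m+2) (k+1)).filter (fun S => m+1 ∈ S)).card = (pathSets m k).card := by
    refine Finset.card_bij (fun S _ => S.erase (m+1)) ?_ ?_ ?_
    · intro S hS
      simp only [Finset.mem_filter, mem_pathSets] at hS
      obtain ⟨⟨hsub, hcard, hcond⟩, hmem⟩ := hS
      rw [mem_pathSets]
      refine ⟨?_, ?_, ?_⟩
      · intro x hx
        rw [Finset.mem_erase] at hx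
        obtain ⟨hne, hxS⟩ := hx
        have hlt := hsub x hxS
        have hxm : x ≠ m := fun h => hcond x hxS (by rw [h]; exact hmem)
        omega
      · rw [Finset.card_erase_of_mem hmem, hcard]
        omega
      · intro x hx
        rw [Finset.mem_erase] at hx
        rw [Finset.mem_erase]
        rintro ⟨-, h⟩
        exact hcond x hx.2 h
    · intro S1 h1 S2 h2 heq
      simp only [Finset.mem_filter] at h1 h2
      rw [← Finset.insert_erase h1.2, ← Finset.insert_erase h2.2]
      exact congrArg (insert (m+1)) heq
    · intro T hT
      rw [mem_pathSets] at hT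
      obtain ⟨hsub, hcard, hcond⟩ := hT
      have hnm : m+1 ∉ T := fun h => by have := hsub _ h; omega
      refine ⟨insert (m+1) T, ?_, Finset.erase_insert hnm⟩
      simp only [Finset.mem_filter, mem_pathSets, Finset.mem_insert]
      refine ⟨⟨?_, ?_, ?_⟩, by simp⟩
      · rintro x (rfl | hx)
        · omega
        · have := hsub x hx; omega
      · rw [Finset.card_insert_of_notMem hnm, hcard]
      · rintro x (rfl | hx)
        · rintro (h | h)
          · omega
          · have := hsub _ h; omega
        · have h1 := hcond x hx
          have h2 := hsub x hx
          rintro (h | h)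
          · omega
          · exact h1 h
  rw [h1, h2] at hsplit
  omega

lemma pathSets_card (m k : ℕ) : (pathSets m k).card = (m + 1 - k).choose k := by
  induction m using Nat.twoStepInduction generalizing k with
  | zero =>
    cases k with
    | zero => simpa using pathSets_zero_card 0
    | succ k => rw [pathSets_card_zero_m]; have : 0 + 1 - (k+1) = 0 := by omega
                rw [this, Nat.choose_zero_succ]
  | one => exact pathSets_one k
  | more m ih1 ih2 =>
    cases k with
    | zero => rw [pathSets_zero_card 0]; simp
    | succ k =>
      rw [pathSets_rec m k, ih2 (k+1), ih1 k]
      rcases le_or_gt k (m+1) with h | h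
      · have e1 : m + 2 + 1 - (k+1) = (m + 1 - k) + 1 := by omega
        have e2 : m + 1 + 1 - (k+1) = m + 1 - k := by omega
        rw [e1, e2, Nat.choose_succ_succ]
        exact Nat.add_comm _ _
      · have e1 : m + 2 + 1 - (k+1) = m + 2 - k := by omega
        have e2 : m + 1 + 1 - (k+1) = m + 1 - k := by omega
        rw [e1, e2]
        obtain ⟨k', rfl⟩ : ∃ k', k = k' + 1 := ⟨k - 1, by omega⟩
        have e3 : m + 2 - (k'+1) = 0 := by omega
        have e4 : m + 1 - (k'+1) = 0 := by omega
        rw [e3, e4, Nat.choose_zero_succ, Nat.choose_zero_succ]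

/-- Independent sets of the path graph on `{1, ..., m}`. -/
def pathSets1 (m k : ℕ) : Finset (Finset ℕ) :=
  ((Finset.Icc 1 m).powersetCard k).filter (fun S => ∀ x ∈ S, x + 1 ∉ S)

lemma mem_pathSets1 {m k : ℕ} {S : Finset ℕ} :
    S ∈ pathSets1 m k ↔ (∀ x ∈ S, 1 ≤ x ∧ x ≤ m) ∧ S.card = k ∧ ∀ x ∈ S, x + 1 ∉ S := by
  simp [pathSets1, Finset.mem_powersetCard, Finset.subset_iff, Finset.mem_Icc, and_assoc]

lemma pathSets1_card (m k : ℕ) : (pathSets1 m k).card = (m + 1 - k).choose k := by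
  rw [← pathSets_card]
  refine Finset.card_nbij' (fun S => S.image (· - 1)) (fun S => S.image (· + 1)) ?_ ?_ ?_ ?_
  · intro S hS
    rw [Finset.mem_coe, mem_pathSets1] at hS
    obtain ⟨hsub, hcard, hcond⟩ := hS
    rw [Finset.mem_coe, mem_pathSets]
    have hinj : Set.InjOn (· - 1) S := by
      intro a ha b hb hab
      have := hsub a ha; have := hsub b hb
      simp only at hab; omega
    refine ⟨?_, ?_, ?_⟩
    · intro x hx
      simp only [Finset.mem_image] at hx
      obtain ⟨y, hy, rfl⟩ := hx
      have := hsub y hy; omega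
    · rw [Finset.card_image_of_injOn hinj, hcard]
    · intro x hx
      simp only [Finset.mem_image] at hx ⊢
      obtain ⟨y, hy, rfl⟩ := hx
      rintro ⟨z, hz, hzx⟩
      have h1 := hsub y hy; have h2 := hsub z hz
      have : z = y + 1 := by omega
      exact hcond y hy (this ▸ hz)
  · intro S hS
    rw [Finset.mem_coe, mem_pathSets] at hS
    obtain ⟨hsub, hcard, hcond⟩ := hS
    rw [Finset.mem_coe, mem_pathSets1]
    refine ⟨?_, ?_, ?_⟩
    · intro x hx
      simp only [Finset.mem_image] at hx
      obtain ⟨y, hy, rfl⟩ := hx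
      have := hsub y hy; omega
    · rw [Finset.card_image_of_injective _ (add_left_injective 1), hcard]
    · intro x hx
      simp only [Finset.mem_image] at hx ⊢
      obtain ⟨y, hy, rfl⟩ := hx
      rintro ⟨z, hz, hzx⟩
      have : z = y + 1 := by omega
      exact hcond y hy (this ▸ hz)
  · intro S hS
    rw [Finset.mem_coe, mem_pathSets1] at hS
    ext x
    simp only [Finset.mem_image]
    constructor
    · rintro ⟨a, ⟨b, hb, rfl⟩, rfl⟩
      have := hS.1 b hb
      have : b - 1 + 1 = b := by omega
      rwa [this]
    · intro hx
      have := hS.1 x hx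
      exact ⟨x - 1, ⟨x, hx, rfl⟩, by omega⟩
  · intro S hS
    rw [Finset.mem_coe, mem_pathSets] at hS
    ext x
    simp only [Finset.mem_image]
    constructor
    · rintro ⟨a, ⟨b, hb, rfl⟩, rfl⟩
      simpa using hb
    · intro hx
      exact ⟨x + 1, ⟨x, hx, rfl⟩, by omega⟩

/-- Independent sets of the cycle graph, as subsets of `range n`. -/
def cycSets (n k : ℕ) : Finset (Finset ℕ) :=
  ((Finset.range n).powersetCard k).filter (fun S => ∀ x ∈ S, (x + 1) % n ∉ S)

lemma mem_cycSets {n k : ℕ} {S : Finset ℕ} :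
    S ∈ cycSets n k ↔ (∀ x ∈ S, x < n) ∧ S.card = k ∧ ∀ x ∈ S, (x + 1) % n ∉ S := by
  simp [cycSets, Finset.mem_powersetCard, Finset.subset_iff, and_assoc]

lemma cycSets_card_zero (n : ℕ) : (cycSets n 0).card = 1 := by
  have : cycSets n 0 = {∅} := by
    ext S
    simp only [mem_cycSets, Finset.card_eq_zero, Finset.mem_singleton]
    constructor
    · rintro ⟨_, rfl, _⟩; rfl
    · rintro rfl; simp
  simp [this]

lemma cycSets_card_succ (n k : ℕ) (hn : 2 ≤ n) :
    (cycSets n (k+1)).card = (pathSets (n-1) (k+1)).card + (pathSets1 (n-3) k).card := by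
  have hsplit := Finset.card_filter_add_card_filter_not
    (s := cycSets n (k+1)) (p := fun S => n-1 ∈ S)
  have h1 : (cycSets n (k+1)).filter (fun S => ¬ n-1 ∈ S) = pathSets (n-1) (k+1) := by
    ext S
    simp only [Finset.mem_filter, mem_cycSets, mem_pathSets]
    constructor
    · rintro ⟨⟨hsub, hcard, hcond⟩, hmem⟩
      refine ⟨?_, hcard, ?_⟩
      · intro x hx
        have := hsub x hx
        have : x ≠ n-1 := fun h => hmem (h ▸ hx)
        omega
      · intro x hx
        have hxlt := hsub x hx
        have hxne : x ≠ n-1 := fun h => hmem (h ▸ hx)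
        have := hcond x hx
        rwa [Nat.mod_eq_of_lt (by omega)] at this
    · rintro ⟨hsub, hcard, hcond⟩
      have hb : ∀ x ∈ S, x < n - 1 := hsub
      refine ⟨⟨fun x hx => by have := hb x hx; omega, hcard, ?_⟩,
        fun h => by have := hb _ h; omega⟩
      intro x hx
      have := hb x hx
      rw [Nat.mod_eq_of_lt (by omega)]
      exact hcond x hx
  have h2 : ((cycSets n (k+1)).filter (fun S => n-1 ∈ S)).card = (pathSets1 (n-3) k).card := by
    refine Finset.card_bij (fun S _ => S.erase (n-1)) ?_ ?_ ?_
    · intro S hS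
      simp only [Finset.mem_filter, mem_cycSets] at hS
      obtain ⟨⟨hsub, hcard, hcond⟩, hmem⟩ := hS
      have h0 : 0 ∉ S := by
        have := hcond (n-1) hmem
        have e : (n - 1 + 1) % n = 0 := by
          have : n - 1 + 1 = n := by omega
          rw [this, Nat.mod_self]
        rwa [e] at this
      rw [mem_pathSets1]
      refine ⟨?_, ?_, ?_⟩
      · intro x hx
        rw [Finset.mem_erase] at hx
        obtain ⟨hne, hxS⟩ := hx
        have hlt := hsub x hxS
        have hx0 : x ≠ 0 := fun h => h0 (h ▸ hxS)
        have hxn2 : x ≠ n-2 := by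
          intro h
          have := hcond x hxS
          rw [h] at this
          have e : (n - 2 + 1) % n = n - 1 := by
            have h1 : n - 2 + 1 = n - 1 := by omega
            rw [h1, Nat.mod_eq_of_lt (by omega)]
          rw [h] at hxS
          exact (e ▸ this) hmem
        omega
      · rw [Finset.card_erase_of_mem hmem, hcard]; omega
      · intro x hx
        rw [Finset.mem_erase] at hx
        obtain ⟨hne, hxS⟩ := hx
        have hlt := hsub x hxS
        have := hcond x hxS
        rw [Finset.mem_erase]
        rintro ⟨hne2, hmem2⟩
        have hxn1 : x < n - 1 := by omega
        rw [Nat.mod_eq_of_lt (by omega)] at this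
        exact this hmem2
    · intro S1 hS1 S2 hS2 heq
      simp only [Finset.mem_filter] at hS1 hS2
      rw [← Finset.insert_erase hS1.2, ← Finset.insert_erase hS2.2]
      exact congrArg (insert (n-1)) heq
    · intro T hT
      rw [mem_pathSets1] at hT
      obtain ⟨hsub, hcard, hcond⟩ := hT
      have hnm : n-1 ∉ T := fun h => by have := hsub _ h; omega
      refine ⟨insert (n-1) T, ?_, Finset.erase_insert hnm⟩
      simp only [Finset.mem_filter, mem_cycSets, Finset.mem_insert]
      refine ⟨⟨?_, ?_, ?_⟩, by simp⟩
      · rintro x (rfl | hx)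
        · omega
        · have := hsub x hx; omega
      · rw [Finset.card_insert_of_notMem hnm, hcard]
      · rintro x (rfl | hx)
        · have e : (n - 1 + 1) % n = 0 := by
            have : n - 1 + 1 = n := by omega
            rw [this, Nat.mod_self]
          rw [e]
          rintro (h | h)
          · omega
          · have := hsub _ h; omega
        · have h1 := hcond x hx
          have h2 := hsub x hx
          rw [Nat.mod_eq_of_lt (by omega)]
          rintro (h | h)
          · omega
          · exact h1 h
  rw [h1, h2] at hsplit
  omega

lemma cycSets_card_formula (n k : ℕ) (hn : 2 ≤ n) (hk : 1 ≤ k) (hkn : 2 * k ≤ n) :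
    (cycSets n k).card = (n - k).choose k + (n - k - 1).choose (k - 1) := by
  obtain ⟨k', rfl⟩ : ∃ k', k = k' + 1 := ⟨k - 1, by omega⟩
  rw [cycSets_card_succ n k' hn, pathSets_card, pathSets1_card]
  have e1 : n - 1 + 1 - (k' + 1) = n - (k' + 1) := by omega
  cases k' with
  | zero => rw [e1]; simp
  | succ j =>
    have e2 : n - 3 + 1 - (j + 1) = n - (j + 1 + 1) - 1 := by omega
    rw [e1, e2]
    simp

lemma sub_val_one {n : ℕ} (hn : 2 ≤ n) (x y : Fin n) :
    (y - x).val = 1 ↔ (x.val + 1) % n = y.val := by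
  rw [Fin.sub_def]
  simp only
  obtain ⟨a, ha⟩ := x
  obtain ⟨b, hb⟩ := y
  simp only
  have hmod : (a + 1) % n = if a + 1 = n then 0 else a + 1 := by
    split
    · next h => rw [h, Nat.mod_self]
    · next h => exact Nat.mod_eq_of_lt (by omega)
  rcases le_or_gt a b with hab | hab
  · have h2 : n - a + b = n + (b - a) := by omega
    rw [h2, Nat.add_mod_left, Nat.mod_eq_of_lt (by omega)]
    split at hmod <;> omega
  · rw [Nat.mod_eq_of_lt (by omega)]
    split at hmod <;> omega

lemma adj_iff {n : ℕ} (hn : 2 ≤ n) (x y : Fin n) :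
    (SimpleGraph.cycleGraph n).Adj x y ↔
      ((x.val + 1) % n = y.val ∨ (y.val + 1) % n = x.val) := by
  rw [SimpleGraph.cycleGraph_adj', sub_val_one hn, sub_val_one hn]
  exact or_comm

lemma numIndep_eq_cycSets (n k : ℕ) (hn : 2 ≤ n) :
    numIndep (SimpleGraph.cycleGraph n) k = (cycSets n k).card := by
  classical
  unfold numIndep
  refine Finset.card_bij (fun S _ => S.image Fin.val) ?_ ?_ ?_
  · intro S hS
    simp only [Finset.mem_filter, Finset.mem_univ, true_and] at hS
    obtain ⟨hind, hcard⟩ : IsIndepSet (SimpleGraph.cycleGraph n) S ∧ S.card = k := hS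
    rw [mem_cycSets]
    refine ⟨?_, ?_, ?_⟩
    · intro x hx
      simp only [Finset.mem_image] at hx
      obtain ⟨y, _, rfl⟩ := hx
      exact y.isLt
    · rw [Finset.card_image_of_injective _ Fin.val_injective, hcard]
    · intro x hx
      simp only [Finset.mem_image] at hx ⊢
      obtain ⟨i, hi, rfl⟩ := hx
      rintro ⟨j, hj, hji⟩
      exact hind i hi j hj ((adj_iff hn i j).mpr (Or.inl hji.symm))
  · intro S1 h1 S2 h2 heq
    exact Finset.image_injective Fin.val_injective heq
  · intro T hT
    rw [mem_cycSets] at hT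
    obtain ⟨hsub, hcard, hcond⟩ := hT
    refine ⟨T.attachFin hsub, ?_, ?_⟩
    · simp only [Finset.mem_filter, Finset.mem_univ, true_and]
      constructor
      · intro i hi j hj hadj
        rw [Finset.mem_attachFin] at hi hj
        rcases (adj_iff hn i j).mp hadj with h | h
        · exact hcond _ hi (h ▸ hj)
        · exact hcond _ hj (h ▸ hi)
      · rw [Finset.card_attachFin, hcard]
    · ext x
      simp only [Finset.mem_image, Finset.mem_attachFin]
      constructor
      · rintro ⟨y, hy, rfl⟩; exact hy
      · intro hx; exact ⟨⟨x, hsub x hx⟩, hx, rfl⟩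

/-- for the cycle `C_n` (`n ≥ 2`), the number of independent sets of
cardinality `k` is `(n/(n-k))·C(n-k, k)` for `0 ≤ k ≤ ⌊n/2⌋`. -/
theorem numIndep_cycleGraph {n : ℕ} (hn : 2 ≤ n) :
    ∀ k ≤ n / 2,
      (numIndep (SimpleGraph.cycleGraph n) k : ℚ) =
        (n : ℚ) / ((n - k : ℕ) : ℚ) * Nat.choose (n - k) k := by
  intro k hk
  have h2k : 2 * k ≤ n := by omega
  rw [numIndep_eq_cycSets n k hn]
  rcases Nat.eq_zero_or_pos k with rfl | hk1
  · rw [cycSets_card_zero]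
    have hq : (n : ℚ) ≠ 0 := by
      have : (0:ℕ) < n := by omega
      exact_mod_cast this.ne'
    simp [Nat.sub_zero, div_self hq]
  · obtain ⟨k', rfl⟩ : ∃ k', k = k' + 1 := ⟨k - 1, by omega⟩
    rw [cycSets_card_formula n (k'+1) hn hk1 h2k]
    obtain ⟨b, hb⟩ : ∃ b, n - (k'+1) = b + 1 := ⟨n - (k'+1) - 1, by omega⟩
    have key := Nat.add_one_mul_choose_eq b k'
    have natid : (n - (k'+1)) *
        ((n - (k'+1)).choose (k'+1) + (n - (k'+1) - 1).choose (k'+1-1)) =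
        n * (n - (k'+1)).choose (k'+1) := by
      rw [hb]
      have e1 : b + 1 - 1 = b := by omega
      have e2 : k' + 1 - 1 = k' := by omega
      rw [e1, e2]
      have hn2 : n = b + 1 + (k' + 1) := by omega
      calc (b+1) * ((b+1).choose (k'+1) + b.choose k')
          = (b+1) * (b+1).choose (k'+1) + (b+1) * b.choose k' := by ring
        _ = (b+1) * (b+1).choose (k'+1) + (b+1).choose (k'+1) * (k'+1) := by
            rw [Nat.add_one_mul_choose_eq]
        _ = (b + 1 + (k'+1)) * (b+1).choose (k'+1) := by ring
        _ = n * (b+1).choose (k'+1) := by rw [← hn2]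
    have hQ : ((n - (k'+1) : ℕ) : ℚ) ≠ 0 := by
      rw [hb]
      exact_mod_cast (Nat.succ_ne_zero b)
    rw [div_mul_eq_mul_div, eq_div_iff hQ]
    have natid' : ((n - (k'+1)).choose (k'+1) + (n - (k'+1) - 1).choose (k'+1-1)) *
        (n - (k'+1)) = n * (n - (k'+1)).choose (k'+1) := by
      rw [Nat.mul_comm]; exact natid
    exact_mod_cast natid'
end
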